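/- There exists an r-Smullyan model which satisfies F-Tarski+ (there is no M-predicate H such that False_M^+ = Φ(H) ∩ Sent_M^+) and T-Tarski (there is no M-predicate H with Φ(H) = True_M) but does not satisfy T-Tarski+ (there is no M-predicate H such that True_M^+ = Φ(H) ∩ Sent_M^+). Concretely, the simple model with Σ = {r, ♯} and Φ(♯) = {♯^i : i ∈ ℕ} ∪ {♯^i r♯♯ : i ∈ ℕ}, extended by the r-Smullyan rule, is such a model. -/
import Mathlib


/-- A Smullyan model over a set of symbols `α`: a set `pred` of predicates
(finite strings over `α`) satisfying the prefix-freeness requirement (†), together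
with a naming function `phi` assigning a set of strings to each string
(only its values on `pred` are relevant). -/
structure SmullyanModel (α : Type) where
  pred : Set (List α)
  prefixFree : ∀ H ∈ pred, ∀ X : List α, X ≠ [] → H ++ X ∉ pred
  phi : List α → Set (List α)

namespace SmullyanModel

variable {α : Type} (M : SmullyanModel α)

/-- The set of `M`-sentences: strings of the form `H ++ X` with `H` a predicate. -/
def sent : Set (List α) := {S | ∃ H ∈ M.pred, ∃ X : List α, S = H ++ X}

/-- `Sent_M^+ = Sent_M \ Pred_M`. -/
def sentPlus : Set (List α) := M.sent \ M.pred

/-- `True_M`: the set of true `M`-sentences. -/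
def trueSet : Set (List α) := {S | ∃ H ∈ M.pred, ∃ X ∈ M.phi H, S = H ++ X}

/-- `True_M^+ = True_M \ Pred_M`. -/
def truePlus : Set (List α) := M.trueSet \ M.pred

/-- `False_M = Sent_M \ True_M`. -/
def falseSet : Set (List α) := M.sent \ M.trueSet

/-- `False_M^+ = Sent_M^+ \ True_M^+`. -/
def falsePlus : Set (List α) := M.sentPlus \ M.truePlus

/-- `M ⊨ S`. -/
def Sat (S : List α) : Prop := S ∈ M.trueSet

/-- `S ∈ Sent_M^+` is an `M`-fixed point of `H` if `M ⊨ S ↔ M ⊨ HS`. -/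
def IsFixedPoint (H S : List α) : Prop :=
  S ∈ M.sentPlus ∧ (M.Sat S ↔ M.Sat (H ++ S))

/-- `M` is an `n`-Smullyan model (with negation symbol `n : α`):
for every predicate `H`, `nH` is a predicate and `Φ(nH) = Σ* \ Φ(H)`. -/
def IsNModel (n : α) : Prop :=
  ∀ H ∈ M.pred, (n :: H) ∈ M.pred ∧ M.phi (n :: H) = {X : List α | X ∉ M.phi H}

/-- `M` is an `r`-Smullyan model (with repeat symbol `r : α`):
for every predicate `H`, `rH` is a predicate and `Φ(rH) = {K ∈ Pred : KK ∈ Φ(H)}`. -/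
def IsRModel (r : α) : Prop :=
  ∀ H ∈ M.pred, (r :: H) ∈ M.pred ∧
    M.phi (r :: H) = {K : List α | K ∈ M.pred ∧ K ++ K ∈ M.phi H}

/-- FPT: every `M`-predicate has an `M`-fixed point. -/
def FPT : Prop := ∀ H ∈ M.pred, ∃ S : List α, M.IsFixedPoint H S

/-- T-Tarski: no `M`-predicate names `True_M`. -/
def TTarski : Prop := ¬ ∃ H ∈ M.pred, M.phi H = M.trueSet

/-- F-Tarski: no `M`-predicate names `False_M`. -/
def FTarski : Prop := ¬ ∃ H ∈ M.pred, M.phi H = M.falseSet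

/-- T-Tarski⁺: there is no `M`-predicate `H` with `True_M⁺ = Φ(H) ∩ Sent_M⁺`. -/
def TTarskiPlus : Prop := ¬ ∃ H ∈ M.pred, M.truePlus = M.phi H ∩ M.sentPlus

/-- F-Tarski⁺: there is no `M`-predicate `H` with `False_M⁺ = Φ(H) ∩ Sent_M⁺`. -/
def FTarskiPlus : Prop := ¬ ∃ H ∈ M.pred, M.falsePlus = M.phi H ∩ M.sentPlus

/-- mG1. -/
def MG1 : Prop :=
  ∀ H ∈ M.pred, M.phi H ⊆ M.trueSet →
    ∃ S ∈ M.sent, M.Sat S ∧ S ∉ M.phi H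

/-- mG1⁺. -/
def MG1Plus : Prop :=
  ∀ H ∈ M.pred, M.phi H ∩ M.sentPlus ⊆ M.truePlus →
    ∃ S ∈ M.sentPlus, M.Sat S ∧ S ∉ M.phi H

/-- G1 (for `n`-Smullyan models). -/
def G1 (n : α) : Prop :=
  ∀ H ∈ M.pred, M.phi H ⊆ M.trueSet →
    ∃ S ∈ M.sent, S ∉ M.phi H ∧ (n :: S) ∉ M.phi H

/-- G1⁺ (for `n`-Smullyan models). -/
def G1Plus (n : α) : Prop :=
  ∀ H ∈ M.pred, M.phi H ∩ M.sentPlus ⊆ M.truePlus →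
    ∃ S ∈ M.sentPlus, S ∉ M.phi H ∧ (n :: S) ∉ M.phi H

/-- The predicate set of a simple model: strings `X♯` where `X` contains no `♯`. -/
def simplePred (sharp : α) : Set (List α) :=
  {L | ∃ X : List α, sharp ∉ X ∧ L = X ++ [sharp]}

end SmullyanModel

inductive SmSym where
  | r
  | sharp
deriving DecidableEq

open SmSym List

def PhiSharp : Set (List SmSym) :=
  {L | ∃ i : ℕ, L = List.replicate i SmSym.sharp} ∪
  {L | ∃ i : ℕ, L = List.replicate i SmSym.sharp ++ [SmSym.r, SmSym.sharp, SmSym.sharp]}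

def mphi : List SmSym → Set (List SmSym)
  | SmSym.r :: T => {K | K ∈ SmullyanModel.simplePred SmSym.sharp ∧ K ++ K ∈ mphi T}
  | [SmSym.sharp] => PhiSharp
  | _ => ∅

lemma mem_simplePred_iff (L : List SmSym) :
    L ∈ SmullyanModel.simplePred SmSym.sharp ↔ ∃ k, L = List.replicate k SmSym.r ++ [SmSym.sharp] := by
  constructor
  · rintro ⟨X, hX, rfl⟩
    refine ⟨X.length, ?_⟩
    have : X = List.replicate X.length SmSym.r := by
      apply List.eq_replicate_iff.2
      refine ⟨rfl, fun b hb => ?_⟩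
      cases b
      · rfl
      · exact absurd hb hX
    rw [← this]
  · rintro ⟨k, rfl⟩
    exact ⟨List.replicate k SmSym.r, by simp, rfl⟩

lemma prefixFree_aux : ∀ H ∈ SmullyanModel.simplePred SmSym.sharp, ∀ X : List SmSym, X ≠ [] →
    H ++ X ∉ SmullyanModel.simplePred SmSym.sharp := by
  intro H hH X hX hmem
  obtain ⟨k, rfl⟩ := (mem_simplePred_iff H).1 hH
  obtain ⟨m, hm⟩ := (mem_simplePred_iff _).1 hmem
  have hlen : k + (X.length + 1) = m + 1 := by
    have := congrArg List.length hm
    simpa using this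
  have hkm : k < m := by
    have : 0 < X.length := List.length_pos_iff.2 hX
    omega
  have h1 : (List.replicate k SmSym.r ++ [SmSym.sharp] ++ X)[k]? = some SmSym.sharp := by
    rw [List.getElem?_append_left (by simp)]
    rw [List.getElem?_append_right (by simp)]
    simp
  have h2 : (List.replicate m SmSym.r ++ [SmSym.sharp])[k]? = some SmSym.r := by
    rw [List.getElem?_append_left (by simpa using hkm)]
    simp [hkm]
  rw [hm] at h1
  rw [h1] at h2
  simp at h2

lemma mphi_cons (T : List SmSym) :
    mphi (SmSym.r :: T) = {K | K ∈ SmullyanModel.simplePred SmSym.sharp ∧ K ++ K ∈ mphi T} := rfl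

lemma mphi_sharp : mphi [SmSym.sharp] = PhiSharp := rfl

lemma count_r_replicate_sharp (i : ℕ) : (List.replicate i SmSym.sharp).count SmSym.r = 0 := by
  simp [List.count_replicate]

lemma mem_PhiSharp_count {L : List SmSym} (h : L ∈ PhiSharp) : L.count SmSym.r ≤ 1 := by
  rcases h with ⟨i, rfl⟩ | ⟨i, rfl⟩ <;>
    simp [List.count_replicate, List.count_cons, List.count_append]

lemma mphi_r_sharp : mphi [SmSym.r, SmSym.sharp] = {[SmSym.sharp]} := by
  rw [show [SmSym.r, SmSym.sharp] = SmSym.r :: [SmSym.sharp] from rfl, mphi_cons, mphi_sharp]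
  ext K
  simp only [Set.mem_setOf_eq, Set.mem_singleton_iff]
  constructor
  · rintro ⟨hK, hKK⟩
    obtain ⟨k, rfl⟩ := (mem_simplePred_iff K).1 hK
    have hc := mem_PhiSharp_count hKK
    simp [List.count_append, List.count_replicate, List.count_cons] at hc
    have hk : k = 0 := by omega
    subst hk
    rfl
  · rintro rfl
    refine ⟨⟨[], by simp, rfl⟩, Or.inl ⟨2, rfl⟩⟩

lemma mphi_rr (k : ℕ) : mphi (List.replicate (k+2) SmSym.r ++ [SmSym.sharp]) = ∅ := by
  induction k with
  | zero =>
    rw [show List.replicate 2 SmSym.r ++ [SmSym.sharp] = SmSym.r :: [SmSym.r, SmSym.sharp] from rfl,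
      mphi_cons, mphi_r_sharp]
    ext K
    simp only [Set.mem_setOf_eq, Set.mem_singleton_iff, Set.mem_empty_iff_false, iff_false]
    rintro ⟨hK, hKK⟩
    obtain ⟨k, rfl⟩ := (mem_simplePred_iff K).1 hK
    have := congrArg List.length hKK
    simp at this
    omega
  | succ n ih =>
    rw [show List.replicate (n+3) SmSym.r ++ [SmSym.sharp]
        = SmSym.r :: (List.replicate (n+2) SmSym.r ++ [SmSym.sharp]) from by
      simp [List.replicate_succ], mphi_cons, ih]
    ext K
    simp

def Msim : SmullyanModel SmSym :=
  ⟨SmullyanModel.simplePred SmSym.sharp, prefixFree_aux, mphi⟩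

lemma Msim_pred : Msim.pred = SmullyanModel.simplePred SmSym.sharp := rfl

lemma Msim_phi (L : List SmSym) : Msim.phi L = mphi L := rfl

lemma pred_cases {H : List SmSym} (hH : H ∈ SmullyanModel.simplePred SmSym.sharp) :
    H = [SmSym.sharp] ∨ H = [SmSym.r, SmSym.sharp] ∨
      ∃ k, H = List.replicate (k+2) SmSym.r ++ [SmSym.sharp] := by
  obtain ⟨k, rfl⟩ := (mem_simplePred_iff H).1 hH
  match k with
  | 0 => exact Or.inl rfl
  | 1 => exact Or.inr (Or.inl rfl)
  | (n+2) => exact Or.inr (Or.inr ⟨n, rfl⟩)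

lemma sharp_pred : [SmSym.sharp] ∈ SmullyanModel.simplePred SmSym.sharp :=
  ⟨[], by simp, rfl⟩

lemma Msim_isR : Msim.IsRModel SmSym.r := by
  intro H hH
  refine ⟨?_, ?_⟩
  · obtain ⟨X, hX, rfl⟩ := hH
    exact ⟨SmSym.r :: X, by simp [hX], rfl⟩
  · rw [show Msim.phi (SmSym.r :: H) = mphi (SmSym.r :: H) from rfl, mphi_cons]
    rfl

lemma trueSet_char : Msim.trueSet =
    {L | ∃ i : ℕ, L = List.replicate (i+1) SmSym.sharp} ∪
    {L | ∃ i : ℕ, L = List.replicate i SmSym.sharp ++ [SmSym.r, SmSym.sharp, SmSym.sharp]} := by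
  ext S
  constructor
  · rintro ⟨H, hH, X, hX, rfl⟩
    rcases pred_cases hH with rfl | rfl | ⟨k, rfl⟩
    · rcases hX with ⟨i, rfl⟩ | ⟨i, rfl⟩
      · exact Or.inl ⟨i, by simp [List.replicate_succ]⟩
      · exact Or.inr ⟨i+1, by simp [List.replicate_succ]⟩
    · rw [show Msim.phi [SmSym.r, SmSym.sharp] = mphi [SmSym.r, SmSym.sharp] from rfl,
        mphi_r_sharp] at hX
      rw [Set.mem_singleton_iff] at hX
      subst hX
      exact Or.inr ⟨0, rfl⟩
    · rw [Msim_phi, mphi_rr] at hX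
      exact absurd hX (Set.notMem_empty X)
  · rintro (⟨i, rfl⟩ | ⟨i, rfl⟩)
    · exact ⟨[SmSym.sharp], sharp_pred, List.replicate i SmSym.sharp,
        Or.inl ⟨i, rfl⟩, by simp [List.replicate_succ]⟩
    · match i with
      | 0 =>
        refine ⟨[SmSym.r, SmSym.sharp], ⟨[SmSym.r], by simp, rfl⟩, [SmSym.sharp], ?_, rfl⟩
        rw [show Msim.phi [SmSym.r, SmSym.sharp] = mphi [SmSym.r, SmSym.sharp] from rfl,
          mphi_r_sharp]
        rfl
      | (j+1) =>
        exact ⟨[SmSym.sharp], sharp_pred,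
          List.replicate j SmSym.sharp ++ [SmSym.r, SmSym.sharp, SmSym.sharp],
          Or.inr ⟨j, rfl⟩, by simp [List.replicate_succ]⟩

lemma rep_sharp_not_pred (i : ℕ) :
    List.replicate (i+2) SmSym.sharp ∉ SmullyanModel.simplePred SmSym.sharp := by
  intro h
  obtain ⟨k, hk⟩ := (mem_simplePred_iff _).1 h
  have hc := congrArg (List.count SmSym.r) hk
  simp [List.count_replicate, List.count_append] at hc
  have hl := congrArg List.length hk
  simp [← hc] at hl

lemma rep_rss_not_pred (i : ℕ) :
    List.replicate i SmSym.sharp ++ [SmSym.r, SmSym.sharp, SmSym.sharp]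
      ∉ SmullyanModel.simplePred SmSym.sharp := by
  intro h
  obtain ⟨k, hk⟩ := (mem_simplePred_iff _).1 h
  have hc := congrArg (List.count SmSym.sharp) hk
  simp [List.count_replicate, List.count_append, List.count_cons] at hc

lemma sharp_r_not_pred : [SmSym.sharp, SmSym.r] ∉ SmullyanModel.simplePred SmSym.sharp := by
  intro h
  obtain ⟨k, hk⟩ := (mem_simplePred_iff _).1 h
  have hl := congrArg List.length hk
  simp at hl
  subst hl
  exact absurd hk (by decide)

lemma trueSet_sub_sent : Msim.trueSet ⊆ Msim.sent := by
  rintro S ⟨H, hH, X, _, rfl⟩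
  exact ⟨H, hH, X, rfl⟩

lemma trueSet_sub_phiSharp : Msim.trueSet ⊆ PhiSharp := by
  rw [trueSet_char]
  rintro S (⟨i, rfl⟩ | ⟨i, rfl⟩)
  · exact Or.inl ⟨i+1, rfl⟩
  · exact Or.inr ⟨i, rfl⟩

lemma truePlus_eq : Msim.truePlus = Msim.phi [SmSym.sharp] ∩ Msim.sentPlus := by
  ext S
  constructor
  · rintro ⟨hT, hnp⟩
    exact ⟨trueSet_sub_phiSharp hT, trueSet_sub_sent hT, hnp⟩
  · rintro ⟨hPhi, hsent, hnp⟩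
    refine ⟨?_, hnp⟩
    rcases hPhi with ⟨i, rfl⟩ | ⟨i, rfl⟩
    · match i with
      | 0 =>
        exfalso
        obtain ⟨H, hH, X, hHX⟩ := hsent
        have hH0 : H = [] := (List.append_eq_nil_iff.1 (by simpa using hHX.symm)).1
        obtain ⟨k, hk⟩ := (mem_simplePred_iff H).1 hH
        rw [hH0] at hk
        have := congrArg List.length hk
        simp at this
      | 1 => exact absurd sharp_pred hnp
      | (j+2) =>
        rw [trueSet_char]
        exact Or.inl ⟨j+1, rfl⟩
    · rw [trueSet_char]
      exact Or.inr ⟨i, rfl⟩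

lemma not_TTarskiPlus : ¬ Msim.TTarskiPlus := by
  intro h
  exact h ⟨[SmSym.sharp], sharp_pred, truePlus_eq⟩

lemma sharp_sharp_true : [SmSym.sharp, SmSym.sharp] ∈ Msim.trueSet := by
  rw [trueSet_char]
  exact Or.inl ⟨1, rfl⟩

lemma TTarski_holds : Msim.TTarski := by
  rintro ⟨H, hH, hphi⟩
  rcases pred_cases hH with rfl | rfl | ⟨k, rfl⟩
  · have h0 : ([] : List SmSym) ∈ Msim.trueSet := by
      rw [← hphi]
      exact Or.inl ⟨0, rfl⟩
    rw [trueSet_char] at h0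
    rcases h0 with ⟨i, hi⟩ | ⟨i, hi⟩ <;>
      · have := congrArg List.length hi
        simp at this
  · have h2 := sharp_sharp_true
    rw [← hphi] at h2
    rw [show Msim.phi [SmSym.r, SmSym.sharp] = mphi [SmSym.r, SmSym.sharp] from rfl,
      mphi_r_sharp, Set.mem_singleton_iff] at h2
    exact absurd h2 (by decide)
  · have h2 := sharp_sharp_true
    rw [← hphi] at h2
    rw [Msim_phi, mphi_rr] at h2
    exact h2

lemma sharp_r_not_true : [SmSym.sharp, SmSym.r] ∉ Msim.trueSet := by
  rw [trueSet_char]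
  rintro (⟨i, hi⟩ | ⟨i, hi⟩)
  · have := congrArg (List.count SmSym.r) hi
    simp [List.count_replicate, List.count_cons] at this
  · have := congrArg List.length hi
    simp at this

lemma sharp_r_sentPlus : [SmSym.sharp, SmSym.r] ∈ Msim.sentPlus :=
  ⟨⟨[SmSym.sharp], sharp_pred, [SmSym.r], rfl⟩, sharp_r_not_pred⟩

lemma FTarskiPlus_holds : Msim.FTarskiPlus := by
  rintro ⟨H, hH, heq⟩
  rcases pred_cases hH with rfl | rfl | ⟨k, rfl⟩
  · -- [♯,♯] is in Φ(♯) ∩ sentPlus but is truePlus, not falsePlus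
    have hmem : [SmSym.sharp, SmSym.sharp] ∈ Msim.phi [SmSym.sharp] ∩ Msim.sentPlus := by
      refine ⟨Or.inl ⟨2, rfl⟩, ⟨[SmSym.sharp], sharp_pred, [SmSym.sharp], rfl⟩, ?_⟩
      exact rep_sharp_not_pred 0
    rw [← heq] at hmem
    exact hmem.2 ⟨sharp_sharp_true, rep_sharp_not_pred 0⟩
  · have hmem : [SmSym.sharp, SmSym.r] ∈ Msim.falsePlus :=
      ⟨sharp_r_sentPlus, fun h => sharp_r_not_true h.1⟩
    rw [heq] at hmem
    have := hmem.1
    rw [show Msim.phi [SmSym.r, SmSym.sharp] = mphi [SmSym.r, SmSym.sharp] from rfl,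
      mphi_r_sharp, Set.mem_singleton_iff] at this
    exact absurd this (by decide)
  · have hmem : [SmSym.sharp, SmSym.r] ∈ Msim.falsePlus :=
      ⟨sharp_r_sentPlus, fun h => sharp_r_not_true h.1⟩
    rw [heq] at hmem
    have := hmem.1
    rw [Msim_phi, mphi_rr] at this
    exact this


/-- There is an `r`-simple model (Σ = {r, ♯}, Φ(♯) = {♯^i : i ∈ ℕ} ∪ {♯^i r♯♯ : i ∈ ℕ})
satisfying F-Tarski⁺ and T-Tarski but not T-Tarski⁺. -/
theorem stmt_16 :
    ∃ M : SmullyanModel SmSym,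
      M.pred = SmullyanModel.simplePred SmSym.sharp ∧
      M.IsRModel SmSym.r ∧
      M.phi [SmSym.sharp] =
        {L : List SmSym | ∃ i : ℕ, L = List.replicate i SmSym.sharp} ∪
        {L : List SmSym | ∃ i : ℕ,
          L = List.replicate i SmSym.sharp ++ [SmSym.r, SmSym.sharp, SmSym.sharp]} ∧
      M.FTarskiPlus ∧
      M.TTarski ∧
      ¬ M.TTarskiPlus :=
  ⟨Msim, rfl, Msim_isR, rfl, FTarskiPlus_holds, TTarski_holds, not_TTarskiPlus⟩
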